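/- Let X and X' be samples of size n differing in one element, D(X,t) the paired empirical CDF of h, and d_δ(·) the empirical (1−δ)-quantile. If h is a continuous random variable with positive density at its (1−δ)-quantile h_δ > 0, then d_δ(X)/d_δ(X') ≤ 1 + O_P(n^{-1/2}); in particular, for any γ_2 > 0 there exist constants and N such that for n ≥ N, P(d_δ(X) ≤ e^{β_n} d_δ(X')) ≥ 1 − γ_2 with β_n = O(n^{-1/2}). -/

import Mathlib

open MeasureTheory

/-- The paired empirical CDF based on a sample of size `2m`. -/
noncomputable def Demp {𝒳 : Type*} (h : 𝒳 → 𝒳 → ℝ) (m : ℕ)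
    (X : Fin (2 * m) → 𝒳) (t : ℝ) : ℝ :=
  (2 / (2 * m : ℝ)) *
    ((Finset.univ.filter fun i : Fin m =>
        h (X ⟨i.1, by have := i.isLt; omega⟩) (X ⟨i.1 + m, by have := i.isLt; omega⟩) ≤ t).card : ℝ)

/-- The empirical `(1-δ)`-quantile of the paired empirical CDF. -/
noncomputable def dquant {𝒳 : Type*} (h : 𝒳 → 𝒳 → ℝ) (m : ℕ) (δ : ℝ)
    (X : Fin (2 * m) → 𝒳) : ℝ :=
  sInf {d : ℝ | 1 - δ ≤ Demp h m X d}

/-- The first `2m` of `2m+1` i.i.d. observations. -/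
def firstN {𝒳 : Type*} (m : ℕ) (ω : Fin (2 * m + 1) → 𝒳) : Fin (2 * m) → 𝒳 :=
  fun i => ω i.castSucc

/-- The sample with the last observation replaced by the fresh draw. -/
def swapLast {𝒳 : Type*} (m : ℕ) (ω : Fin (2 * m + 1) → 𝒳) : Fin (2 * m) → 𝒳 :=
  fun i => if (i : ℕ) = 2 * m - 1 then ω (Fin.last (2 * m)) else ω i.castSucc



open Set ProbabilityTheory
open scoped ENNReal NNReal

/-- Pulling back a finite product of a probability measure along an injection. -/
lemma pi_map_comp_inj {β γ 𝒳 : Type*} [Fintype β] [Fintype γ] [MeasurableSpace 𝒳]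
    (P : Measure 𝒳) [IsProbabilityMeasure P] (k : γ → β) (hk : Function.Injective k) :
    MeasurePreserving (fun ω : β → 𝒳 => ω ∘ k)
      (Measure.pi fun _ : β => P) (Measure.pi fun _ : γ => P) := by
  classical
  have hmeas : Measurable (fun ω : β → 𝒳 => ω ∘ k) :=
    measurable_pi_lambda _ fun a => measurable_pi_apply (k a)
  refine ⟨hmeas, ?_⟩
  refine (Measure.pi_eq fun s hs => ?_).symm
  rw [Measure.map_apply hmeas (MeasurableSet.univ_pi hs)]
  have hpre : (fun ω : β → 𝒳 => ω ∘ k) ⁻¹' (univ.pi s)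
      = univ.pi (fun b => ⋂ (a : γ) (_ : k a = b), s a) := by
    ext ω
    simp only [mem_preimage, mem_pi, mem_univ, forall_true_left, mem_iInter, Function.comp]
    constructor
    · intro H b a hab; subst hab; exact H a
    · intro H a; exact H (k a) a rfl
  rw [hpre, Measure.pi_pi]
  have h1 : ∀ a : γ, (⋂ (a' : γ) (_ : k a' = k a), s a') = s a := by
    intro a
    apply Subset.antisymm
    · intro x hx
      exact mem_iInter₂.1 hx a rfl
    · intro x hx
      refine mem_iInter₂.2 fun a' ha' => ?_
      rwa [hk ha']
  have h2 : ∀ b : β, b ∉ Finset.univ.image k → P (⋂ (a : γ) (_ : k a = b), s a) = 1 := by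
    intro b hb
    have : (⋂ (a : γ) (_ : k a = b), s a) = univ := by
      refine eq_univ_of_forall fun x => mem_iInter₂.2 fun a ha => ?_
      exact absurd (Finset.mem_image.2 ⟨a, Finset.mem_univ _, ha⟩) hb
    rw [this]; exact measure_univ
  rw [← Finset.prod_subset (Finset.subset_univ (Finset.univ.image k)) (fun b _ hb => h2 b hb)]
  rw [Finset.prod_image (fun a _ a' _ hh => hk hh)]
  exact (Finset.prod_congr rfl fun a _ => by rw [h1 a]).symm

lemma pi_meas_biInter_eval {ι 𝒳 : Type*} [Fintype ι] [MeasurableSpace 𝒳]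
    (P : Measure 𝒳) [IsProbabilityMeasure P] (S : Finset ι) (sets : ι → Set 𝒳)
    (hs : ∀ i ∈ S, MeasurableSet (sets i)) :
    (Measure.pi fun _ : ι => P) (⋂ i ∈ S, (fun ω : ι → 𝒳 => ω i) ⁻¹' sets i)
      = ∏ i ∈ S, P (sets i) := by
  classical
  have hset : (⋂ i ∈ S, (fun ω : ι → 𝒳 => ω i) ⁻¹' sets i)
      = univ.pi (fun i => if i ∈ S then sets i else univ) := by
    ext ω
    simp only [mem_iInter, mem_preimage, mem_pi, mem_univ, forall_true_left]
    constructor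
    · intro H i; by_cases hi : i ∈ S <;> simp [hi, H]
    · intro H i hi; have := H i; rwa [if_pos hi] at this
  rw [hset, Measure.pi_pi]
  rw [← Finset.prod_subset (Finset.subset_univ S) (fun i _ hi => by simp [if_neg hi])]
  exact Finset.prod_congr rfl fun i hi => by rw [if_pos hi]

lemma iIndepFun_eval_pi {ι 𝒳 : Type*} [Fintype ι] [MeasurableSpace 𝒳]
    (P : Measure 𝒳) [IsProbabilityMeasure P] :
    ProbabilityTheory.iIndepFun
      (fun i (ω : ι → 𝒳) => ω i) (Measure.pi fun _ : ι => P) := by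
  rw [ProbabilityTheory.iIndepFun_iff_measure_inter_preimage_eq_mul]
  intro S sets hs
  rw [pi_meas_biInter_eval P S sets hs]
  refine Finset.prod_congr rfl fun i hi => ?_
  have := pi_meas_biInter_eval P {i} sets (by simpa using hs i hi)
  simpa using this.symm

lemma core_cheb {𝒳 : Type*} [MeasurableSpace 𝒳] (P : Measure 𝒳) [IsProbabilityMeasure P]
    (h : 𝒳 → 𝒳 → ℝ) (hmeas : Measurable (Function.uncurry h)) (m : ℕ)
    (t θ : ℝ) (hθ : 0 < θ) (Ht : ℝ)
    (hHt : Ht = ((P.prod P) {y : 𝒳 × 𝒳 | h y.1 y.2 ≤ t}).toReal) :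
    (Measure.pi fun _ : Fin m ⊕ Fin m => P)
      {η | θ ≤ |(∑ i : Fin m, if h (η (Sum.inl i)) (η (Sum.inr i)) ≤ t then (1:ℝ) else 0)
        - m * Ht|} ≤ ENNReal.ofReal ((m : ℝ) / (4 * θ^2)) := by
  classical
  set ν := (Measure.pi fun _ : Fin m ⊕ Fin m => P) with hν
  set A : Set (𝒳 × 𝒳) := {y : 𝒳 × 𝒳 | h y.1 y.2 ≤ t} with hA
  have hAmeas : MeasurableSet A := by
    have : A = Function.uncurry h ⁻¹' (Iic t) := rfl
    rw [this]; exact hmeas measurableSet_Iic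
  -- the coordinate pair maps are measure preserving
  have hπ : ∀ i : Fin m, MeasurePreserving
      (fun η : Fin m ⊕ Fin m → 𝒳 => (η (Sum.inl i), η (Sum.inr i))) ν (P.prod P) := by
    intro i
    have hk : Function.Injective (![Sum.inl i, Sum.inr i] : Fin 2 → Fin m ⊕ Fin m) := by
      intro a b hab
      fin_cases a <;> fin_cases b <;> simp_all
    have h1 := pi_map_comp_inj P _ hk
    have h2 := measurePreserving_finTwoArrow (α := 𝒳) P
    have h3 := h2.comp h1
    convert h3 using 1
    funext η; rfl
  set B : Fin m → Set (Fin m ⊕ Fin m → 𝒳) := fun i =>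
    (fun η : Fin m ⊕ Fin m → 𝒳 => (η (Sum.inl i), η (Sum.inr i))) ⁻¹' A with hB
  have hBmeas : ∀ i, MeasurableSet (B i) := fun i => (hπ i).measurable hAmeas
  have hBmeasure : ∀ i, ν (B i) = (P.prod P) A := fun i => (hπ i).measure_preimage hAmeas.nullMeasurableSet
  set f : Fin m → (Fin m ⊕ Fin m → 𝒳) → ℝ := fun i => (B i).indicator (fun _ => (1:ℝ)) with hf
  have hfeq : ∀ i η, f i η = if h (η (Sum.inl i)) (η (Sum.inr i)) ≤ t then (1:ℝ) else 0 := by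
    intro i η
    simp only [hf, Set.indicator_apply, hB, mem_preimage, hA, mem_setOf_eq]
  have hfmem : ∀ i, MemLp (f i) 2 ν := fun i =>
    memLp_indicator_const 2 (hBmeas i) (1:ℝ) (Or.inr (measure_ne_top _ _))
  have hHt01 : 0 ≤ Ht ∧ Ht ≤ 1 := by
    constructor
    · rw [hHt]; exact ENNReal.toReal_nonneg
    · rw [hHt]
      exact ENNReal.toReal_le_of_le_ofReal one_pos.le (by simpa using prob_le_one)
  have hint : ∀ i, ∫ η, f i η ∂ν = Ht := by
    intro i
    rw [hf]
    rw [integral_indicator_const (1:ℝ) (hBmeas i)]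
    rw [measureReal_def, hBmeasure i, hHt]; simp
  have hsq : ∀ i, (fun η => f i η ^ 2) = f i := by
    intro i; funext η
    by_cases hh : η ∈ B i <;> simp [hf, Set.indicator_apply, hh]
  have hvar : ∀ i, variance (f i) ν = Ht - Ht ^ 2 := by
    intro i
    rw [variance_eq_sub (hfmem i)]
    have h1 : (fun η => (f i) η ^ 2) = f i := hsq i
    have : ν[(f i) ^ 2] = Ht := by
      rw [show (f i) ^ 2 = fun η => f i η ^ 2 from rfl, h1, hint i]
    rw [this, hint i]
  -- pairwise independence
  have hindep : Set.Pairwise ↑(Finset.univ : Finset (Fin m))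
      (fun i j => IndepFun (f i) (f j) ν) := by
    intro i _ j _ hij
    have hev := iIndepFun_eval_pi (ι := Fin m ⊕ Fin m) P
    have hdisj : Disjoint ({Sum.inl i, Sum.inr i} : Finset (Fin m ⊕ Fin m))
        ({Sum.inl j, Sum.inr j} : Finset (Fin m ⊕ Fin m)) := by
      simp [Finset.disjoint_left, hij, Ne.symm hij]
    have hIF := hev.indepFun_finset _ _ hdisj (fun x => measurable_pi_apply x)
    set φ : ∀ l : Fin m, (({Sum.inl l, Sum.inr l} : Finset (Fin m ⊕ Fin m)) → 𝒳) → ℝ :=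
      fun l r => if h (r ⟨Sum.inl l, by simp⟩) (r ⟨Sum.inr l, by simp⟩) ≤ t then (1:ℝ) else 0
      with hφ
    have hφmeas : ∀ l, Measurable (φ l) := by
      intro l
      apply Measurable.ite _ measurable_const measurable_const
      have hg : Measurable (fun r : (({Sum.inl l, Sum.inr l} : Finset (Fin m ⊕ Fin m)) → 𝒳) =>
          (r ⟨Sum.inl l, by simp⟩, r ⟨Sum.inr l, by simp⟩)) :=
        (measurable_pi_apply _).prodMk (measurable_pi_apply _)
      exact (hmeas.comp hg) measurableSet_Iic
    have hcomp : ∀ l, f l = φ l ∘ (fun (a : Fin m ⊕ Fin m → 𝒳)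
        (x : ({Sum.inl l, Sum.inr l} : Finset (Fin m ⊕ Fin m))) => a x) := by
      intro l; funext η; rw [hfeq]; rfl
    rw [hcomp i, hcomp j]
    exact hIF.comp (hφmeas i) (hφmeas j)
  -- variance of the sum
  have hvarsum : variance (∑ i : Fin m, f i) ν = m * (Ht - Ht ^ 2) := by
    rw [IndepFun.variance_sum (fun i _ => hfmem i) hindep]
    simp [hvar]
    ring
  have hmemsum : MemLp (∑ i : Fin m, f i) 2 ν := memLp_finset_sum' _ (fun i _ => hfmem i)
  have hintsum : ν[∑ i : Fin m, f i] = m * Ht := by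
    rw [show ((∑ i : Fin m, f i) : (Fin m ⊕ Fin m → 𝒳) → ℝ)
        = fun η => ∑ i : Fin m, f i η by funext η; simp]
    rw [integral_finset_sum _ (fun i _ => ((hfmem i).integrable one_le_two))]
    simp [hint]
  have hcheb := meas_ge_le_variance_div_sq (μ := ν) hmemsum hθ
  rw [hintsum, hvarsum] at hcheb
  have hsetEq : {η : Fin m ⊕ Fin m → 𝒳 | θ ≤
      |(∑ i : Fin m, if h (η (Sum.inl i)) (η (Sum.inr i)) ≤ t then (1:ℝ) else 0) - m * Ht|}
      = {η | θ ≤ |(∑ i : Fin m, f i) η - m * Ht|} := by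
    ext η
    simp only [mem_setOf_eq, Finset.sum_apply]
    rw [Finset.sum_congr rfl (fun i (_ : i ∈ Finset.univ) => (hfeq i η).symm)]
  rw [hsetEq]
  refine le_trans hcheb (ENNReal.ofReal_le_ofReal ?_)
  have hθ2 : 0 < θ ^ 2 := by positivity
  rw [div_le_div_iff₀ hθ2 (by positivity)]
  have h1 : Ht - Ht ^ 2 ≤ 1/4 := by nlinarith [sq_nonneg (Ht - 1/2)]
  have hm0 : (0:ℝ) ≤ m := Nat.cast_nonneg m
  nlinarith [mul_le_mul_of_nonneg_right (mul_le_mul_of_nonneg_left h1 hm0)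
    (by positivity : (0:ℝ) ≤ 4 * θ ^ 2)]

lemma Demp_mono {𝒳 : Type*} (h : 𝒳 → 𝒳 → ℝ) (m : ℕ) (X : Fin (2 * m) → 𝒳) :
    Monotone (Demp h m X) := by
  intro t t' htt'
  unfold Demp
  apply mul_le_mul_of_nonneg_left _ (by positivity)
  have hsub : (Finset.univ.filter fun i : Fin m =>
      h (X ⟨i.1, by have := i.isLt; omega⟩) (X ⟨i.1 + m, by have := i.isLt; omega⟩) ≤ t)
      ⊆ (Finset.univ.filter fun i : Fin m =>
      h (X ⟨i.1, by have := i.isLt; omega⟩) (X ⟨i.1 + m, by have := i.isLt; omega⟩) ≤ t') := by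
    intro i hi
    simp only [Finset.mem_filter] at *
    exact ⟨hi.1, hi.2.trans htt'⟩
  exact_mod_cast Finset.card_le_card hsub

lemma Demp_nonneg_mem {𝒳 : Type*} (h : 𝒳 → 𝒳 → ℝ) (m : ℕ) (X : Fin (2 * m) → 𝒳)
    (hnn : ∀ x y, 0 ≤ h x y) {δ : ℝ} (hδ1 : δ < 1) :
    ∀ d ∈ {d : ℝ | 1 - δ ≤ Demp h m X d}, (0:ℝ) ≤ d := by
  intro d hd
  simp only [mem_setOf_eq] at hd
  by_contra hneg
  push_neg at hneg
  have hzero : Demp h m X d = 0 := by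
    unfold Demp
    have : (Finset.univ.filter fun i : Fin m =>
        h (X ⟨i.1, by have := i.isLt; omega⟩) (X ⟨i.1 + m, by have := i.isLt; omega⟩) ≤ d)
        = ∅ := by
      apply Finset.filter_false_of_mem
      intro i _
      push_neg
      exact lt_of_lt_of_le hneg (hnn _ _)
    rw [this]; simp
  rw [hzero] at hd; linarith

lemma Demp_one {𝒳 : Type*} (h : 𝒳 → 𝒳 → ℝ) (m : ℕ) (hm : 0 < m) (X : Fin (2 * m) → 𝒳) :
    ∃ d : ℝ, Demp h m X d = 1 := by
  set g : Fin m → ℝ := fun i =>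
    h (X ⟨i.1, by have := i.isLt; omega⟩) (X ⟨i.1 + m, by have := i.isLt; omega⟩) with hg
  have hne : (Finset.univ.image g).Nonempty := by
    apply Finset.image_nonempty.2
    exact Finset.univ_nonempty_iff.2 ⟨⟨0, hm⟩⟩
  refine ⟨(Finset.univ.image g).max' hne, ?_⟩
  unfold Demp
  have hall : (Finset.univ.filter fun i : Fin m =>
      h (X ⟨i.1, by have := i.isLt; omega⟩) (X ⟨i.1 + m, by have := i.isLt; omega⟩)
        ≤ (Finset.univ.image g).max' hne) = Finset.univ := by
    apply Finset.filter_true_of_mem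
    intro i _
    exact Finset.le_max' _ (g i) (Finset.mem_image_of_mem _ (Finset.mem_univ i))
  rw [hall, Finset.card_univ, Fintype.card_fin]
  have hm' : (m:ℝ) ≠ 0 := Nat.cast_ne_zero.2 hm.ne'
  field_simp

lemma dquant_le_of {𝒳 : Type*} (h : 𝒳 → 𝒳 → ℝ) (m : ℕ) (X : Fin (2 * m) → 𝒳)
    (hnn : ∀ x y, 0 ≤ h x y) {δ d : ℝ} (hδ1 : δ < 1)
    (hd : 1 - δ ≤ Demp h m X d) : dquant h m δ X ≤ d :=
  csInf_le ⟨0, fun x hx => Demp_nonneg_mem h m X hnn hδ1 x hx⟩ hd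

lemma le_dquant_of {𝒳 : Type*} (h : 𝒳 → 𝒳 → ℝ) (m : ℕ) (hm : 0 < m) (X : Fin (2 * m) → 𝒳)
    {δ t : ℝ} (hδ0 : 0 < δ) (hd : Demp h m X t < 1 - δ) : t ≤ dquant h m δ X := by
  obtain ⟨d0, hd0⟩ := Demp_one h m hm X
  apply le_csInf ⟨d0, by simp only [mem_setOf_eq, hd0]; linarith⟩
  intro d hd'
  simp only [mem_setOf_eq] at hd'
  by_contra hlt
  push_neg at hlt
  have := Demp_mono h m X hlt.le
  linarith

def kfirst (m : ℕ) : Fin m ⊕ Fin m → Fin (2 * m + 1) :=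
  Sum.elim (fun i => ⟨i.1, by have := i.isLt; omega⟩)
    (fun i => ⟨i.1 + m, by have := i.isLt; omega⟩)

def kswap (m : ℕ) : Fin m ⊕ Fin m → Fin (2 * m + 1) :=
  Sum.elim (fun i => ⟨i.1, by have := i.isLt; omega⟩)
    (fun i => if i.1 = m - 1 then ⟨2 * m, by omega⟩ else ⟨i.1 + m, by have := i.isLt; omega⟩)

lemma kfirst_inj (m : ℕ) : Function.Injective (kfirst m) := by
  intro a b hab
  rcases a with a | a <;> rcases b with b | b <;>
      simp only [kfirst, Sum.elim_inl, Sum.elim_inr, Fin.mk.injEq] at hab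
  · congr 1; exact Fin.ext hab
  · exfalso; have ha := a.isLt; have hb := b.isLt; omega
  · exfalso; have ha := a.isLt; have hb := b.isLt; omega
  · congr 1; exact Fin.ext (by omega)

lemma kswap_inj (m : ℕ) : Function.Injective (kswap m) := by
  intro a b hab
  rcases a with a | a <;> rcases b with b | b
  · simp only [kswap, Sum.elim_inl, Fin.mk.injEq] at hab
    congr 1; exact Fin.ext hab
  · exfalso
    simp only [kswap, Sum.elim_inl, Sum.elim_inr] at hab
    have ha := a.isLt; have hb := b.isLt
    by_cases hc : b.1 = m - 1 <;> simp [hc, Fin.mk.injEq] at hab <;> omega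
  · exfalso
    simp only [kswap, Sum.elim_inl, Sum.elim_inr] at hab
    have ha := a.isLt; have hb := b.isLt
    by_cases hc : a.1 = m - 1 <;> simp [hc, Fin.mk.injEq] at hab <;> omega
  · simp only [kswap, Sum.elim_inr] at hab
    have ha := a.isLt; have hb := b.isLt
    by_cases hc : a.1 = m - 1 <;> by_cases hd : b.1 = m - 1 <;>
      simp [hc, hd, Fin.mk.injEq] at hab <;> (congr 1; exact Fin.ext (by omega))

lemma sum_eq_Demp_firstN {𝒳 : Type*} (h : 𝒳 → 𝒳 → ℝ) (m : ℕ) (hm : 0 < m)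
    (ω : Fin (2 * m + 1) → 𝒳) (t : ℝ) :
    (∑ i : Fin m, if h (ω (kfirst m (Sum.inl i))) (ω (kfirst m (Sum.inr i))) ≤ t
      then (1:ℝ) else 0) = m * Demp h m (firstN m ω) t := by
  classical
  have hterm : ∀ i : Fin m,
      (if h (ω (kfirst m (Sum.inl i))) (ω (kfirst m (Sum.inr i))) ≤ t then (1:ℝ) else 0)
      = (if h (firstN m ω ⟨i.1, by have := i.isLt; omega⟩)
            (firstN m ω ⟨i.1 + m, by have := i.isLt; omega⟩) ≤ t then (1:ℝ) else 0) := by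
    intro i
    have e1 : ω (kfirst m (Sum.inl i)) = firstN m ω ⟨i.1, by have := i.isLt; omega⟩ := by
      unfold firstN kfirst
      exact congrArg ω (Fin.ext (by simp))
    have e2 : ω (kfirst m (Sum.inr i)) = firstN m ω ⟨i.1 + m, by have := i.isLt; omega⟩ := by
      unfold firstN kfirst
      exact congrArg ω (Fin.ext (by simp))
    rw [e1, e2]
  rw [Finset.sum_congr rfl (fun i _ => hterm i), Finset.sum_boole]
  unfold Demp
  have hm' : (m:ℝ) ≠ 0 := Nat.cast_ne_zero.2 hm.ne'
  field_simp

lemma sum_eq_Demp_swapLast {𝒳 : Type*} (h : 𝒳 → 𝒳 → ℝ) (m : ℕ) (hm : 0 < m)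
    (ω : Fin (2 * m + 1) → 𝒳) (t : ℝ) :
    (∑ i : Fin m, if h (ω (kswap m (Sum.inl i))) (ω (kswap m (Sum.inr i))) ≤ t
      then (1:ℝ) else 0) = m * Demp h m (swapLast m ω) t := by
  classical
  have hterm : ∀ i : Fin m,
      (if h (ω (kswap m (Sum.inl i))) (ω (kswap m (Sum.inr i))) ≤ t then (1:ℝ) else 0)
      = (if h (swapLast m ω ⟨i.1, by have := i.isLt; omega⟩)
            (swapLast m ω ⟨i.1 + m, by have := i.isLt; omega⟩) ≤ t then (1:ℝ) else 0) := by
    intro i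
    have hi := i.isLt
    have e1 : ω (kswap m (Sum.inl i)) = swapLast m ω ⟨i.1, by omega⟩ := by
      simp only [kswap, Sum.elim_inl, swapLast]
      rw [if_neg (show ¬((⟨i.1, by omega⟩ : Fin (2 * m)) : ℕ) = 2 * m - 1 by simp; omega)]
      exact congrArg ω (Fin.ext (by simp))
    have e2 : ω (kswap m (Sum.inr i)) = swapLast m ω ⟨i.1 + m, by omega⟩ := by
      simp only [kswap, Sum.elim_inr, swapLast]
      by_cases hc : i.1 = m - 1
      · rw [if_pos hc,
          if_pos (show ((⟨i.1 + m, by omega⟩ : Fin (2 * m)) : ℕ) = 2 * m - 1 by simp; omega)]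
        exact congrArg ω (Fin.ext (by simp [Fin.last]))
      · rw [if_neg hc,
          if_neg (show ¬((⟨i.1 + m, by omega⟩ : Fin (2 * m)) : ℕ) = 2 * m - 1 by simp; omega)]
        exact congrArg ω (Fin.ext (by simp))
    rw [e1, e2]
  rw [Finset.sum_congr rfl (fun i _ => hterm i), Finset.sum_boole]
  unfold Demp
  have hm' : (m:ℝ) ≠ 0 := Nat.cast_ne_zero.2 hm.ne'
  field_simp

lemma count_cheb {𝒳 : Type*} [MeasurableSpace 𝒳] (P : Measure 𝒳) [IsProbabilityMeasure P]
    (h : 𝒳 → 𝒳 → ℝ) (hmeas : Measurable (Function.uncurry h)) (m : ℕ)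
    (t θ : ℝ) (hθ : 0 < θ) (Ht : ℝ)
    (hHt : Ht = ((P.prod P) {y : 𝒳 × 𝒳 | h y.1 y.2 ≤ t}).toReal)
    (k : Fin m ⊕ Fin m → Fin (2 * m + 1)) (hk : Function.Injective k) :
    (Measure.pi fun _ : Fin (2 * m + 1) => P)
      {ω | θ ≤ |(∑ i : Fin m, if h (ω (k (Sum.inl i))) (ω (k (Sum.inr i))) ≤ t
        then (1:ℝ) else 0) - m * Ht|} ≤ ENNReal.ofReal ((m : ℝ) / (4 * θ^2)) := by
  classical
  set Bad : Set (Fin m ⊕ Fin m → 𝒳) :=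
    {η | θ ≤ |(∑ i : Fin m, if h (η (Sum.inl i)) (η (Sum.inr i)) ≤ t then (1:ℝ) else 0)
      - m * Ht|} with hBad
  have hT : Measurable (fun η : Fin m ⊕ Fin m → 𝒳 =>
      (∑ i : Fin m, if h (η (Sum.inl i)) (η (Sum.inr i)) ≤ t then (1:ℝ) else 0)) := by
    apply Finset.measurable_sum
    intro i _
    apply Measurable.ite _ measurable_const measurable_const
    have hg : Measurable (fun η : Fin m ⊕ Fin m → 𝒳 =>
        (η (Sum.inl i), η (Sum.inr i))) :=
      (measurable_pi_apply _).prodMk (measurable_pi_apply _)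
    exact (hmeas.comp hg) measurableSet_Iic
  have hBadMeas : MeasurableSet Bad :=
    measurableSet_le measurable_const ((hT.sub measurable_const).abs)
  have hpre : {ω : Fin (2 * m + 1) → 𝒳 | θ ≤
      |(∑ i : Fin m, if h (ω (k (Sum.inl i))) (ω (k (Sum.inr i))) ≤ t
        then (1:ℝ) else 0) - m * Ht|} = (fun ω => ω ∘ k) ⁻¹' Bad := rfl
  rw [hpre, (pi_map_comp_inj P k hk).measure_preimage hBadMeas.nullMeasurableSet]
  exact core_cheb P h hmeas m t θ hθ Ht hHt

set_option maxHeartbeats 1000000 in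
/-- **Stability of the empirical sensitivity quantile.** Let `H` be the CDF of
`h(x,x')` for independent draws from `P`, continuous with positive derivative
(density) at its `(1-δ)`-quantile `h_δ > 0`. Then `d_δ(X)/d_δ(X') ≤ 1 + O_P(n^{-1/2})`
for samples `X, X'` differing in one element: for every `γ₂ > 0` there are a constant
`C` and `N` such that for all `n = 2m ≥ N`,
`P(d_δ(X) ≤ e^{β_n} d_δ(X')) ≥ 1 - γ₂` with `β_n = C·n^{-1/2}`. -/
theorem stmt18 {𝒳 : Type*} [MeasurableSpace 𝒳] (P : Measure 𝒳) [IsProbabilityMeasure P]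
    (h : 𝒳 → 𝒳 → ℝ) (hmeas : Measurable (Function.uncurry h)) (hnn : ∀ x y, 0 ≤ h x y)
    (δ : ℝ) (hδ0 : 0 < δ) (hδ1 : δ < 1)
    (H : ℝ → ℝ) (hH : H = fun t => ((P.prod P) {p | h p.1 p.2 ≤ t}).toReal)
    (hHcont : Continuous H)
    (hq : ℝ) (hhq : hq = sInf {t | 1 - δ ≤ H t}) (hqpos : 0 < hq)
    (hdens : ∃ c : ℝ, 0 < c ∧ HasDerivAt H c hq) :
    ∀ γ2 : ℝ, 0 < γ2 → ∃ C : ℝ, ∃ N : ℕ, ∀ m : ℕ, N ≤ m →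
      (Measure.pi fun _ : Fin (2 * m + 1) => P)
          {ω | dquant h m δ (firstN m ω) ≤
            Real.exp (C / Real.sqrt (2 * m)) * dquant h m δ (swapLast m ω)}
        ≥ ENNReal.ofReal (1 - γ2) := by
  classical
  obtain ⟨c, hc, hderiv⟩ := hdens
  intro γ2 hγ2
  by_cases hγ2' : 1 ≤ γ2
  · exact ⟨0, 0, fun m _ => by
      rw [ENNReal.ofReal_of_nonpos (by linarith)]; exact zero_le⟩
  push_neg at hγ2'
  -- H hq = 1 - δ
  have hqset : {t | 1 - δ ≤ H t}.Nonempty := by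
    by_contra hne
    rw [not_nonempty_iff_eq_empty] at hne
    rw [hhq, hne, Real.sInf_empty] at hqpos
    exact lt_irrefl 0 hqpos
  have hbdd : BddBelow {t | 1 - δ ≤ H t} := by
    by_contra hb
    rw [hhq, Real.sInf_of_not_bddBelow hb] at hqpos
    exact lt_irrefl 0 hqpos
  have hclosed : IsClosed {t | 1 - δ ≤ H t} := isClosed_le continuous_const hHcont
  have hge : 1 - δ ≤ H hq := by
    have := hclosed.csInf_mem hqset hbdd
    rw [← hhq] at this
    exact this
  have hle : H hq ≤ 1 - δ := by
    by_contra hlt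
    push_neg at hlt
    have hopen : IsOpen {x | 1 - δ < H x} := isOpen_lt continuous_const hHcont
    obtain ⟨r', hr', hball⟩ := Metric.isOpen_iff.1 hopen hq hlt
    have hmem2 : hq - r'/2 ∈ {t | 1 - δ ≤ H t} := by
      have : hq - r'/2 ∈ Metric.ball hq r' := by
        simp only [Metric.mem_ball, Real.dist_eq]
        rw [abs_of_nonpos (by linarith)]
        linarith
      have h3 : 1 - δ < H (hq - r'/2) := hball this
      exact h3.le
    have := csInf_le hbdd hmem2
    rw [← hhq] at this
    linarith
  have hH1δ : H hq = 1 - δ := le_antisymm hle hge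
  -- local derivative bound
  have hlo := hasDerivAt_iff_isLittleO.1 hderiv
  have hbound := hlo.bound (half_pos hc)
  obtain ⟨ε₀, hε₀, hloc⟩ := Metric.eventually_nhds_iff.1 hbound
  -- constants
  set a : ℝ := 2 / (c * Real.sqrt γ2) with ha
  have hsγ : 0 < Real.sqrt γ2 := Real.sqrt_pos.2 hγ2
  have ha0 : 0 < a := by positivity
  have ha2 : a^2 = 4 / (c^2 * γ2) := by
    rw [ha, div_pow, mul_pow, Real.sq_sqrt hγ2.le]
    norm_num
  set r : ℝ := min ε₀ (hq/2) with hr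
  have hr0 : 0 < r := lt_min hε₀ (by linarith)
  set C : ℝ := 4 * a / hq with hC
  refine ⟨C, ⌈a^2 / (2 * r^2)⌉₊ + 1, fun m hm => ?_⟩
  have hm0 : 0 < m := by omega
  have hmR : (0:ℝ) < m := by exact_mod_cast hm0
  have hs2m : 0 < Real.sqrt (2*m) := Real.sqrt_pos.2 (by positivity)
  set ε : ℝ := a / Real.sqrt (2*m) with hε
  have hε0 : 0 < ε := div_pos ha0 hs2m
  have hε2 : ε^2 = a^2 / (2*m) := by
    rw [hε, div_pow, Real.sq_sqrt (by positivity)]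
  have hmgt : a^2 / (2*r^2) < (m:ℝ) := by
    have h1 : a^2/(2*r^2) ≤ (⌈a^2/(2*r^2)⌉₊ : ℝ) := Nat.le_ceil _
    have h2 : ((⌈a^2/(2*r^2)⌉₊ + 1 : ℕ) : ℝ) ≤ (m:ℝ) := by exact_mod_cast hm
    push_cast at h2
    linarith
  have hεr : ε < r := by
    by_contra hcon
    push_neg at hcon
    have h1 : r^2 ≤ ε^2 := pow_le_pow_left₀ hr0.le hcon 2
    rw [hε2] at h1
    have h2 : a^2/(2*r^2) < m := hmgt
    rw [div_lt_iff₀ (by positivity)] at h2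
    have h3 : a^2 / (2*m) < r^2 := by
      rw [div_lt_iff₀ (by positivity)]
      calc a^2 < (m:ℝ) * (2*r^2) := h2
        _ = r^2 * (2*m) := by ring
    linarith
  have hεε₀ : ε < ε₀ := lt_of_lt_of_le hεr (min_le_left _ _)
  have hεhq : ε ≤ hq/2 := le_of_lt (lt_of_lt_of_le hεr (min_le_right _ _))
  set t₁ : ℝ := hq + ε with ht₁
  set t₂ : ℝ := hq - ε with ht₂
  have ht₂0 : 0 < t₂ := by rw [ht₂]; linarith
  -- H bounds at t₁, t₂
  have hup : 1 - δ + c*ε/2 ≤ H t₁ := by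
    have hd : dist t₁ hq < ε₀ := by
      rw [Real.dist_eq, ht₁, add_sub_cancel_left, abs_of_pos hε0]
      exact hεε₀
    have := hloc hd
    rw [Real.norm_eq_abs, Real.norm_eq_abs, ht₁, add_sub_cancel_left, smul_eq_mul,
      abs_of_pos hε0] at this
    have h1 := (abs_le.1 this).1
    rw [hH1δ] at h1
    linarith
  have hdown : H t₂ ≤ 1 - δ - c*ε/2 := by
    have hd : dist t₂ hq < ε₀ := by
      rw [Real.dist_eq, ht₂, sub_sub_cancel_left, abs_neg, abs_of_pos hε0]
      exact hεε₀
    have := hloc hd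
    rw [Real.norm_eq_abs, Real.norm_eq_abs, ht₂, sub_sub_cancel_left, smul_eq_mul,
      abs_neg, abs_of_pos hε0] at this
    have h1 := (abs_le.1 this).2
    rw [hH1δ] at h1
    linarith
  set θ : ℝ := m * (c*ε) / 2 with hθ
  have hθ0 : 0 < θ := by positivity
  have hkey : (m:ℝ)/(4*θ^2) ≤ γ2/2 := by
    have e1 : 4*θ^2 = (m:ℝ)^2*c^2*ε^2 := by rw [hθ]; ring
    have e2 : (m:ℝ)^2*c^2*ε^2 = 2*m/γ2 := by
      rw [hε2, ha2]
      field_simp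
      ring
    rw [e1, e2]
    rw [div_le_div_iff₀ (by positivity) (by norm_num)]
    have e3 : γ2 * (2 * (m:ℝ) / γ2) = 2 * m := by field_simp
    rw [e3]
    linarith
  -- the two bad events
  have hb1 := count_cheb P h hmeas m t₁ θ hθ0 (H t₁) (by rw [hH]) (kfirst m) (kfirst_inj m)
  have hb2 := count_cheb P h hmeas m t₂ θ hθ0 (H t₂) (by rw [hH]) (kswap m) (kswap_inj m)
  set μ := (Measure.pi fun _ : Fin (2 * m + 1) => P) with hμ
  set B₁ := {ω : Fin (2*m+1) → 𝒳 | θ ≤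
    |(∑ i : Fin m, if h (ω (kfirst m (Sum.inl i))) (ω (kfirst m (Sum.inr i))) ≤ t₁
      then (1:ℝ) else 0) - m * H t₁|} with hB₁
  set B₂ := {ω : Fin (2*m+1) → 𝒳 | θ ≤
    |(∑ i : Fin m, if h (ω (kswap m (Sum.inl i))) (ω (kswap m (Sum.inr i))) ≤ t₂
      then (1:ℝ) else 0) - m * H t₂|} with hB₂
  have hsub : (B₁ ∪ B₂)ᶜ ⊆ {ω : Fin (2*m+1) → 𝒳 | dquant h m δ (firstN m ω) ≤
      Real.exp (C / Real.sqrt (2 * m)) * dquant h m δ (swapLast m ω)} := by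
    intro ω hω
    simp only [mem_compl_iff, mem_union, not_or, hB₁, hB₂, mem_setOf_eq, not_le] at hω
    obtain ⟨h1, h2⟩ := hω
    rw [sum_eq_Demp_firstN h m hm0 ω t₁] at h1
    rw [sum_eq_Demp_swapLast h m hm0 ω t₂] at h2
    have hD1 : 1 - δ ≤ Demp h m (firstN m ω) t₁ := by
      have habs := (abs_lt.1 h1).1
      have hmul : (m:ℝ)*(1-δ) < m * Demp h m (firstN m ω) t₁ := by
        rw [hθ] at habs
        have hint := mul_le_mul_of_nonneg_left hup hmR.le
        linarith
      have := (mul_lt_mul_iff_right₀ hmR).1 hmul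
      linarith
    have hD2 : Demp h m (swapLast m ω) t₂ < 1 - δ := by
      have habs := (abs_lt.1 h2).2
      have hmul : (m:ℝ) * Demp h m (swapLast m ω) t₂ < m*(1-δ) := by
        rw [hθ] at habs
        have hint := mul_le_mul_of_nonneg_left hdown hmR.le
        linarith
      exact (mul_lt_mul_iff_right₀ hmR).1 hmul
    have q1 : dquant h m δ (firstN m ω) ≤ t₁ := dquant_le_of h m _ hnn hδ1 hD1
    have q2 : t₂ ≤ dquant h m δ (swapLast m ω) := le_dquant_of h m hm0 _ hδ0 hD2
    have hCsq : C / Real.sqrt (2*m) = 4*ε/hq := by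
      rw [hC, hε]
      field_simp
    have hexp : t₁ ≤ Real.exp (C / Real.sqrt (2*m)) * t₂ := by
      have e1 : 1 + 4*ε/hq ≤ Real.exp (4*ε/hq) := by
        have := Real.add_one_le_exp (4*ε/hq)
        linarith
      have e2 : t₁ ≤ (1 + 4*ε/hq) * t₂ := by
        have expand : (1 + 4*ε/hq)*(hq - ε) = hq + 3*ε - 4*ε^2/hq := by
          field_simp
          ring
        have hb : 4*ε^2/hq ≤ 2*ε := by
          rw [div_le_iff₀ hqpos]
          have hint := mul_le_mul_of_nonneg_left hεhq (by positivity : (0:ℝ) ≤ 4*ε)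
          calc 4*ε^2 = 4*ε*ε := by ring
            _ ≤ 4*ε*(hq/2) := hint
            _ = 2*ε*hq := by ring
        rw [ht₁, ht₂, expand]
        linarith
      calc t₁ ≤ (1 + 4*ε/hq) * t₂ := e2
        _ ≤ Real.exp (4*ε/hq) * t₂ := mul_le_mul_of_nonneg_right e1 ht₂0.le
        _ = Real.exp (C / Real.sqrt (2*m)) * t₂ := by rw [hCsq]
    simp only [mem_setOf_eq]
    calc dquant h m δ (firstN m ω) ≤ t₁ := q1
      _ ≤ Real.exp (C / Real.sqrt (2*m)) * t₂ := hexp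
      _ ≤ Real.exp (C / Real.sqrt (2*m)) * dquant h m δ (swapLast m ω) :=
        mul_le_mul_of_nonneg_left q2 (Real.exp_pos _).le
  have hM : μ (B₁ ∪ B₂) ≤ ENNReal.ofReal γ2 := by
    calc μ (B₁ ∪ B₂) ≤ μ B₁ + μ B₂ := measure_union_le _ _
      _ ≤ ENNReal.ofReal (γ2/2) + ENNReal.ofReal (γ2/2) :=
        add_le_add (le_trans hb1 (ENNReal.ofReal_le_ofReal hkey))
          (le_trans hb2 (ENNReal.ofReal_le_ofReal hkey))
      _ = ENNReal.ofReal γ2 := by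
        rw [← ENNReal.ofReal_add (by linarith) (by linarith)]
        norm_num
  have hcompl : 1 - μ (B₁ ∪ B₂) ≤ μ ((B₁ ∪ B₂)ᶜ) := by
    have h1 : (1:ℝ≥0∞) ≤ μ ((B₁ ∪ B₂)ᶜ) + μ (B₁ ∪ B₂) := by
      have h2 : μ ((B₁ ∪ B₂)ᶜ ∪ (B₁ ∪ B₂)) ≤ μ ((B₁ ∪ B₂)ᶜ) + μ (B₁ ∪ B₂) :=
        measure_union_le _ _
      rw [compl_union_self] at h2
      rw [← measure_univ (μ := μ)]
      exact h2
    exact tsub_le_iff_right.2 h1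
  calc ENNReal.ofReal (1 - γ2) ≤ 1 - ENNReal.ofReal γ2 := by
        apply ENNReal.le_sub_of_add_le_right ENNReal.ofReal_ne_top
        rw [← ENNReal.ofReal_add (by linarith) (by linarith)]
        norm_num
    _ ≤ 1 - μ (B₁ ∪ B₂) := tsub_le_tsub_left hM 1
    _ ≤ μ ((B₁ ∪ B₂)ᶜ) := hcompl
    _ ≤ μ {ω : Fin (2*m+1) → 𝒳 | dquant h m δ (firstN m ω) ≤
        Real.exp (C / Real.sqrt (2 * m)) * dquant h m δ (swapLast m ω)} := measure_mono hsub
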